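/- For each β ∈ {★32, 3★2, 32★, ★21, 2★1, 21★}, under the bidirectional replacement 123 ↔ β all identity permutations of length at least 4 are equivalent to one another: id_m ≡ id_n for all m, n ≥ 4. -/

import Mathlib

/-!
Pattern-replacement equivalences between permutations of different lengths
(arXiv:1309.4802). A ★-pattern is encoded as a `List (Option ℕ)`, where `none`
is the placeholder ★ and `some k` an integer entry.
-/

/-- A ★-pattern / star-string entry: `none` is ★, `some k` an integer `k`. -/
abbrev SPat := List (Option ℕ)

/-- The integer entries of a star-string, in order. -/
def ints (ρ : SPat) : List ℕ := ρ.filterMap id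

/-- Two lists of naturals are order-isomorphic. -/
def OrdIso (u v : List ℕ) : Prop :=
  u.length = v.length ∧
  ∀ i j, i < u.length → j < u.length → (u.getD i 0 < u.getD j 0 ↔ v.getD i 0 < v.getD j 0)

/-- A valid string of distinct positive integers and ★'s. -/
def StarStr (ρ : SPat) : Prop := (ints ρ).Nodup ∧ ∀ k ∈ ints ρ, 0 < k

/-- `r` (entry by entry) forms a copy of the ★-pattern `δ`: ★'s in the same
positions, and the integer entries order-isomorphic. -/
def IsCopy (r δ : SPat) : Prop :=
  r.length = δ.length ∧
  (∀ i, (r.getD i none = none ↔ δ.getD i none = none)) ∧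
  OrdIso (ints r) (ints δ)

/-- `Repl a b ρ₁ ρ₂` : `ρ₂` is obtained from `ρ₁` by replacing an occurrence of `a`
as a (not necessarily contiguous) substring of `ρ₁` by `b`, entry by entry at the
same positions. -/
inductive Repl : SPat → SPat → SPat → SPat → Prop
  | nil : Repl [] [] [] []
  | keep {a b ρ₁ ρ₂} (x : Option ℕ) : Repl a b ρ₁ ρ₂ → Repl a b (x :: ρ₁) (x :: ρ₂)
  | repl {a b ρ₁ ρ₂} (x y : Option ℕ) :
      Repl a b ρ₁ ρ₂ → Repl (x :: a) (y :: b) (x :: ρ₁) (y :: ρ₂)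

/-- `π` is a permutation of `1, …, n` (as a list). -/
def IsPermList (π : List ℕ) : Prop := π.Perm (List.range' 1 π.length)

/-- `σ` is a result of the replacement `α → β` applied to the permutation `π`:
(1) `ρ₁` is `π` renumbered (order-isomorphically) with ★'s inserted anywhere;
(2) a substring `a` of `ρ₁` forming a copy of `α` is replaced (in place) by a
string `b` that is a copy of `β`, whose integers meet `ρ₁` only inside `a`, and
which agrees with `a` on the integer entries common to `α` and `β`;
(3) dropping ★'s and renumbering gives the permutation `σ`. -/
def IsResult (α β : SPat) (π σ : List ℕ) : Prop :=
  ∃ ρ₁ ρ₂ a b : SPat,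
    StarStr ρ₁ ∧ OrdIso π (ints ρ₁) ∧
    IsCopy a α ∧
    StarStr b ∧ IsCopy b β ∧
    (∀ k ∈ ints b, k ∈ ints ρ₁ → k ∈ ints a) ∧
    (∀ i j x, α.getD i none = some x → β.getD j none = some x →
      a.getD i none = b.getD j none) ∧
    Repl a b ρ₁ ρ₂ ∧
    IsPermList σ ∧ OrdIso (ints ρ₂) σ

/-- Equivalence under the bidirectional replacement `α ↔ β`: a finite sequence
of `α → β` and `β → α` replacements. -/
def PermEquiv (α β : SPat) (π σ : List ℕ) : Prop :=
  Relation.ReflTransGen (fun τ υ => IsResult α β τ υ ∨ IsResult β α τ υ) π σ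

/-- `π` is isolated under `α ↔ β`: no other permutation is equivalent to it. -/
def Isolated (α β : SPat) (π : List ℕ) : Prop :=
  ∀ σ : List ℕ, IsPermList σ → PermEquiv α β π σ → σ = π

/-- The identity permutation `1 2 ⋯ n`. -/
def idPerm (n : ℕ) : List ℕ := List.range' 1 n

/-- The reverse identity permutation `n (n-1) ⋯ 1`. -/
def ridPerm (n : ℕ) : List ℕ := (List.range' 1 n).reverse

def pat123 : SPat := [some 1, some 2, some 3]
def pat132 : SPat := [some 1, some 3, some 2]
def patS32 : SPat := [none, some 3, some 2]
def pat3S2 : SPat := [some 3, none, some 2]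
def pat32S : SPat := [some 3, some 2, none]
def patS31 : SPat := [none, some 3, some 1]
def pat3S1 : SPat := [some 3, none, some 1]
def pat31S : SPat := [some 3, some 1, none]
def patS21 : SPat := [none, some 2, some 1]
def pat2S1 : SPat := [some 2, none, some 1]
def pat21S : SPat := [some 2, some 1, none]
def pat12S : SPat := [some 1, some 2, none]
def pat1S3 : SPat := [some 1, none, some 3]
def patS23 : SPat := [none, some 2, some 3]
def patS12 : SPat := [none, some 1, some 2]
def pat23S : SPat := [some 2, some 3, none]
def pat13S : SPat := [some 1, some 3, none]
def pat1S2 : SPat := [some 1, none, some 2]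

/-! ### Helper lemmas -/

lemma ints_cons_some (v : ℕ) (l : SPat) : ints (some v :: l) = v :: ints l := rfl
lemma ints_cons_none (l : SPat) : ints (none :: l) = ints l := rfl

lemma ints_concat (pre : SPat) (s m : ℕ) :
    ints (pre ++ (List.range' s m).map some) = ints pre ++ List.range' s m := by
  simp [ints, List.filterMap_append, List.filterMap_map, List.filterMap_eq_map]

lemma repl_nil_refl (t : SPat) : Repl [] [] t t := by
  induction t with
  | nil => exact Repl.nil
  | cons x l ih => exact Repl.keep x ih

lemma repl_append {a b u v : SPat} (h : Repl a b u v) (t : SPat) :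
    Repl a b (u ++ t) (v ++ t) := by
  induction h with
  | nil => exact repl_nil_refl t
  | keep x _ ih => exact Repl.keep x ih
  | repl x y _ ih => exact Repl.repl x y ih

lemma repl_symm {a b u v : SPat} (h : Repl a b u v) : Repl b a v u := by
  induction h with
  | nil => exact Repl.nil
  | keep x _ ih => exact Repl.keep x ih
  | repl x y _ ih => exact Repl.repl y x ih

lemma repl_sublist_left {a b u v : SPat} (h : Repl a b u v) : a.Sublist u := by
  induction h with
  | nil => exact List.Sublist.refl _
  | keep x _ ih => exact ih.cons x
  | repl x y _ ih => exact ih.cons₂ x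

lemma ordIso_refl (u : List ℕ) : OrdIso u u := ⟨rfl, fun _ _ _ _ => Iff.rfl⟩

lemma ordIso_symm {u v : List ℕ} (h : OrdIso u v) : OrdIso v u :=
  ⟨h.1.symm, fun i j hi hj => (h.2 i j (h.1 ▸ hi) (h.1 ▸ hj)).symm⟩

lemma ordIso_pre (u v : List ℕ) (L : ℕ) (hu : u.length = L) (hv : v.length = L)
    (h : ∀ i, i < L → ∀ j, j < L → (u.getD i 0 < u.getD j 0 ↔ v.getD i 0 < v.getD j 0)) :
    OrdIso u v := ⟨hu.trans hv.symm, fun i j hi hj => h i (hu ▸ hi) j (hu ▸ hj)⟩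

lemma getD_range' (s k j : ℕ) (h : j < k) : (List.range' s k).getD j 0 = s + j := by
  rw [List.getD_eq_getElem _ _ (by simpa using h), List.getElem_range']; omega

lemma ordIso_append (P Q : List ℕ) (s t k : ℕ) (hlen : P.length = Q.length)
    (hP : ∀ x ∈ P, x < s) (hQ : ∀ x ∈ Q, x < t) (h : OrdIso P Q) :
    OrdIso (P ++ List.range' s k) (Q ++ List.range' t k) := by
  constructor
  · simp [hlen]
  intro i j hi hj
  simp only [List.length_append, List.length_range'] at hi hj
  rcases lt_or_ge i P.length with hiP | hiP <;> rcases lt_or_ge j P.length with hjP | hjP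
  · rw [List.getD_append _ _ _ _ hiP, List.getD_append _ _ _ _ hjP,
      List.getD_append _ _ _ _ (hlen ▸ hiP), List.getD_append _ _ _ _ (hlen ▸ hjP)]
    exact h.2 i j hiP hjP
  · rw [List.getD_append _ _ _ _ hiP, List.getD_append_right _ _ _ _ hjP,
      List.getD_append _ _ _ _ (hlen ▸ hiP), List.getD_append_right _ _ _ _ (hlen ▸ hjP)]
    have hj' : j - P.length < k := by omega
    rw [getD_range' _ _ _ hj', getD_range' _ _ _ (by omega)]
    have h1 : P.getD i 0 < s := by
      rw [List.getD_eq_getElem _ _ hiP]; exact hP _ (List.getElem_mem _)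
    have h2 : Q.getD i 0 < t := by
      rw [List.getD_eq_getElem _ _ (hlen ▸ hiP)]; exact hQ _ (List.getElem_mem _)
    constructor <;> intro <;> omega
  · rw [List.getD_append_right _ _ _ _ hiP, List.getD_append _ _ _ _ hjP,
      List.getD_append_right _ _ _ _ (hlen ▸ hiP), List.getD_append _ _ _ _ (hlen ▸ hjP)]
    have hi' : i - P.length < k := by omega
    rw [getD_range' _ _ _ hi', getD_range' _ _ _ (by omega)]
    have h1 : P.getD j 0 < s := by
      rw [List.getD_eq_getElem _ _ hjP]; exact hP _ (List.getElem_mem _)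
    have h2 : Q.getD j 0 < t := by
      rw [List.getD_eq_getElem _ _ (hlen ▸ hjP)]; exact hQ _ (List.getElem_mem _)
    constructor <;> intro <;> omega
  · rw [List.getD_append_right _ _ _ _ hiP, List.getD_append_right _ _ _ _ hjP,
      List.getD_append_right _ _ _ _ (hlen ▸ hiP), List.getD_append_right _ _ _ _ (hlen ▸ hjP)]
    have hi' : i - P.length < k := by omega
    have hj' : j - P.length < k := by omega
    rw [getD_range' _ _ _ hi', getD_range' _ _ _ hj',
      getD_range' _ _ _ (by omega), getD_range' _ _ _ (by omega)]
    rw [hlen]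
    constructor <;> intro <;> omega

lemma isCopy_pre (r δ : SPat) (L : ℕ) (hr : r.length = L) (hδ : δ.length = L)
    (hstar : ∀ i, i < L → (r.getD i none = none ↔ δ.getD i none = none))
    (hiso : OrdIso (ints r) (ints δ)) : IsCopy r δ := by
  refine ⟨hr.trans hδ.symm, fun i => ?_, hiso⟩
  rcases lt_or_ge i L with hi | hi
  · exact hstar i hi
  · rw [List.getD_eq_default _ _ (hr ▸ hi), List.getD_eq_default _ _ (hδ ▸ hi)]

lemma agree_pre (A B a b : SPat) (hA : A.length = 3) (hB : B.length = 3)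
    (h : ∀ i, i < 3 → ∀ j, j < 3 → (A.getD i none ≠ none → A.getD i none = B.getD j none →
      a.getD i none = b.getD j none)) :
    ∀ i j x, A.getD i none = some x → B.getD j none = some x →
      a.getD i none = b.getD j none := by
  intro i j x hi hj
  have hi3 : i < 3 := by
    by_contra hc
    rw [List.getD_eq_default _ _ (by omega : A.length ≤ i)] at hi
    exact nomatch hi
  have hj3 : j < 3 := by
    by_contra hc
    rw [List.getD_eq_default _ _ (by omega : B.length ≤ j)] at hj
    exact nomatch hj
  exact h i hi3 j hj3 (by rw [hi]; exact Option.some_ne_none _) (hi.trans hj.symm)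

lemma ints_sublist {u v : SPat} (h : u.Sublist v) : (ints u).Sublist (ints v) :=
  h.filterMap id

lemma repl_mem_ints {a b u v : SPat} (h : Repl a b u v) (hnd : (ints u).Nodup) :
    ∀ k ∈ ints v, k ∈ ints b ∨ (k ∈ ints u ∧ k ∉ ints a) := by
  induction h with
  | nil => intro k hk; simp [ints] at hk
  | keep x h ih =>
    cases x with
    | none => simpa [ints_cons_none] using ih hnd
    | some v =>
      rw [ints_cons_some] at hnd ⊢
      intro k hk
      rcases List.mem_cons.mp hk with rfl | hk'
      · right
        refine ⟨List.mem_cons_self, fun hka => ?_⟩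
        exact (List.nodup_cons.mp hnd).1 ((ints_sublist (repl_sublist_left h)).mem hka)
      · rcases ih (List.nodup_cons.mp hnd).2 k hk' with hb | ⟨h1, h2⟩
        · exact Or.inl hb
        · exact Or.inr ⟨List.mem_cons_of_mem _ h1, h2⟩
  | @repl a' b' u' v' x y h ih =>
    have hnd' : (ints u').Nodup := by
      cases x with
      | none => rwa [ints_cons_none] at hnd
      | some v => exact (List.nodup_cons.mp (by rwa [ints_cons_some] at hnd)).2
    intro k hk
    have hk' : k ∈ ints v' ∨ y = some k := by
      cases y with
      | none => rw [ints_cons_none] at hk; exact Or.inl hk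
      | some w =>
        rw [ints_cons_some] at hk
        rcases List.mem_cons.mp hk with rfl | hk2
        · exact Or.inr rfl
        · exact Or.inl hk2
    rcases hk' with hk2 | rfl
    · rcases ih hnd' k hk2 with hb | ⟨h1, h2⟩
      · left
        cases y with
        | none => rwa [ints_cons_none]
        | some w => rw [ints_cons_some]; exact List.mem_cons_of_mem _ hb
      · right
        constructor
        · cases x with
          | none => rwa [ints_cons_none]
          | some v => rw [ints_cons_some]; exact List.mem_cons_of_mem _ h1
        · cases x with
          | none => rwa [ints_cons_none]
          | some v =>
            rw [ints_cons_some]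
            intro hmem
            rcases List.mem_cons.mp hmem with rfl | hka
            · rw [ints_cons_some] at hnd
              exact (List.nodup_cons.mp hnd).1 h1
            · exact h2 hka
    · left; rw [ints_cons_some]; exact List.mem_cons_self

lemma repl_nodup {a b u v : SPat} (h : Repl a b u v) (hnd : (ints u).Nodup)
    (hb : (ints b).Nodup) (hcond : ∀ k ∈ ints b, k ∈ ints u → k ∈ ints a) :
    (ints v).Nodup := by
  induction h with
  | nil => exact hnd
  | keep x h ih =>
    cases x with
    | none =>
      rw [ints_cons_none] at hnd ⊢
      exact ih hnd hb (fun k hk h1 => hcond k hk (by rwa [ints_cons_none]))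
    | some v =>
      rw [ints_cons_some] at hnd ⊢
      have hnd2 := (List.nodup_cons.mp hnd).2
      have hv := (List.nodup_cons.mp hnd).1
      refine List.nodup_cons.mpr ⟨fun hmem => ?_, ih hnd2 hb (fun k hk h1 =>
        hcond k hk (by rw [ints_cons_some]; exact List.mem_cons_of_mem _ h1))⟩
      rcases repl_mem_ints h hnd2 v hmem with hvb | ⟨h1, _⟩
      · have := hcond v hvb (by rw [ints_cons_some]; exact List.mem_cons_self)
        exact hv ((ints_sublist (repl_sublist_left h)).mem this)
      · exact hv h1
  | @repl a' b' u' v' x y h ih =>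
    have hnd' : (ints u').Nodup := by
      cases x with
      | none => rwa [ints_cons_none] at hnd
      | some v => exact (List.nodup_cons.mp (by rwa [ints_cons_some] at hnd)).2
    have hb' : (ints b').Nodup := by
      cases y with
      | none => rwa [ints_cons_none] at hb
      | some w => exact (List.nodup_cons.mp (by rwa [ints_cons_some] at hb)).2
    have hcond' : ∀ k ∈ ints b', k ∈ ints u' → k ∈ ints a' := by
      intro k hk h1
      have hk2 : k ∈ ints (y :: b') := by
        cases y with
        | none => rwa [ints_cons_none]
        | some w => rw [ints_cons_some]; exact List.mem_cons_of_mem _ hk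
      have h2 : k ∈ ints (x :: u') := by
        cases x with
        | none => rwa [ints_cons_none]
        | some v => rw [ints_cons_some]; exact List.mem_cons_of_mem _ h1
      have := hcond k hk2 h2
      cases x with
      | none => rwa [ints_cons_none] at this
      | some v =>
        rw [ints_cons_some] at this
        rcases List.mem_cons.mp this with rfl | hka
        · rw [ints_cons_some] at hnd
          exact absurd h1 (List.nodup_cons.mp hnd).1
        · exact hka
    have ihr := ih hnd' hb' hcond'
    cases y with
    | none => rwa [ints_cons_none]
    | some w =>
      rw [ints_cons_some]
      refine List.nodup_cons.mpr ⟨fun hmem => ?_, ihr⟩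
      rw [ints_cons_some] at hb
      have hwb := (List.nodup_cons.mp hb).1
      rcases repl_mem_ints h hnd' w hmem with hwb' | ⟨h1, h2⟩
      · exact hwb hwb'
      · have := hcond w (by rw [ints_cons_some]; exact List.mem_cons_self)
          (by cases x with
            | none => rwa [ints_cons_none]
            | some v => rw [ints_cons_some]; exact List.mem_cons_of_mem _ h1)
        cases x with
        | none => exact h2 (by rwa [ints_cons_none] at this)
        | some v =>
          rw [ints_cons_some] at this
          rcases List.mem_cons.mp this with rfl | hka
          · rw [ints_cons_some] at hnd
            exact (List.nodup_cons.mp hnd).1 h1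
          · exact h2 hka

lemma isResult_symm {α β : SPat} {π σ : List ℕ} (hπ : IsPermList π)
    (h : IsResult α β π σ) : IsResult β α σ π := by
  obtain ⟨ρ₁, ρ₂, a, b, h1, h2, h3, h4, h5, h6, h7, h8, h9, h10⟩ := h
  refine ⟨ρ₂, ρ₁, b, a, ?_, ordIso_symm h10, h5, ?_, h3, ?_, ?_, repl_symm h8, hπ,
    ordIso_symm h2⟩
  · refine ⟨repl_nodup h8 h1.1 h4.1 h6, fun k hk => ?_⟩
    rcases repl_mem_ints h8 h1.1 k hk with hb | ⟨hm, _⟩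
    · exact h4.2 k hb
    · exact h1.2 k hm
  · exact ⟨(h1.1).sublist (ints_sublist (repl_sublist_left h8)),
      fun k hk => h1.2 k ((ints_sublist (repl_sublist_left h8)).mem hk)⟩
  · intro k hk hk2
    rcases repl_mem_ints h8 h1.1 k hk2 with hb | ⟨_, hna⟩
    · exact hb
    · exact absurd hk hna
  · intro i j x hi hj
    exact (h7 j i x hj hi).symm

lemma idPerm_split4 (m : ℕ) : idPerm (m + 4) = [1,2,3,4] ++ List.range' 5 m := by
  have := List.range'_append (s := 1) (m := 4) (n := m) (step := 1)
  simp at this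
  rw [idPerm, Nat.add_comm m 4, ← this]; rfl

lemma idPerm_split5 (m : ℕ) : idPerm (m + 5) = [1,2,3,4,5] ++ List.range' 6 m := by
  have := List.range'_append (s := 1) (m := 5) (n := m) (step := 1)
  simp at this
  rw [idPerm, Nat.add_comm m 5, ← this]; rfl

lemma isPermList_concat (Q : List ℕ) (t m : ℕ) (hQ : Q.Perm (List.range' 1 Q.length))
    (ht : t = Q.length + 1) : IsPermList (Q ++ List.range' t m) := by
  unfold IsPermList
  have hr := List.range'_append (s := 1) (m := Q.length) (n := m) (step := 1)
  simp only [one_mul] at hr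
  rw [List.length_append, List.length_range', ← hr]
  exact hQ.append (by rw [ht, Nat.add_comm 1 Q.length])

lemma isResult_construct (A B P1 P2 a b : SPat) (πp σp : List ℕ) (s tπ tσ m : ℕ)
    (hs : 0 < s)
    (hnd1 : (ints P1).Nodup) (hpos1 : ∀ x ∈ ints P1, 0 < x ∧ x < s)
    (hCa : IsCopy a A) (hSb : StarStr b) (hCb : IsCopy b B)
    (hbnd : ∀ k ∈ ints b, k < s)
    (hsub : ∀ k ∈ ints b, k ∈ ints P1 → k ∈ ints a)
    (hagree : ∀ i j x, A.getD i none = some x → B.getD j none = some x →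
      a.getD i none = b.getD j none)
    (hrepl : Repl a b P1 P2)
    (hperm : σp.Perm (List.range' 1 σp.length)) (htσ : tσ = σp.length + 1)
    (hlenπ : πp.length = (ints P1).length) (hπb : ∀ x ∈ πp, x < tπ)
    (hisoπ : OrdIso πp (ints P1))
    (hlenσ : (ints P2).length = σp.length) (hP2b : ∀ x ∈ ints P2, x < s)
    (hσb : ∀ x ∈ σp, x < tσ) (hisoσ : OrdIso (ints P2) σp) :
    IsResult A B (πp ++ List.range' tπ m) (σp ++ List.range' tσ m) := by
  refine ⟨P1 ++ (List.range' s m).map some, P2 ++ (List.range' s m).map some, a, b,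
    ?_, ?_, hCa, hSb, hCb, ?_, hagree, repl_append hrepl _, isPermList_concat σp tσ m hperm htσ, ?_⟩
  · rw [StarStr, ints_concat]
    constructor
    · refine List.Nodup.append hnd1 List.nodup_range' ?_
      intro x hx hy
      have h1 := (hpos1 x hx).2
      have h2 := List.mem_range'.mp hy
      simp only [one_mul] at h2
      omega
    · intro k hk
      rcases List.mem_append.mp hk with h1 | h2
      · exact (hpos1 k h1).1
      · have := List.mem_range'.mp h2; omega
  · rw [ints_concat]
    exact ordIso_append πp (ints P1) tπ s m hlenπ hπb (fun x hx => (hpos1 x hx).2) hisoπ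
  · intro k hk hmem
    rw [ints_concat] at hmem
    rcases List.mem_append.mp hmem with h1 | h2
    · exact hsub k hk h1
    · have := List.mem_range'.mp h2
      have := hbnd k hk
      omega
  · rw [ints_concat]
    exact ordIso_append (ints P2) σp s tσ m hlenσ hP2b hσb hisoσ

lemma step1_patS32 (m : ℕ) :
    IsResult pat123 patS32 ([1, 2, 3, 4] ++ List.range' 5 m) ([1, 3, 2] ++ List.range' 4 m) := by
  have hrepl : Repl [some 2, some 3, some 4] [none, some 4, some 3] [some 1, some 2, some 3, some 4] [some 1, none, some 4, some 3] :=
    Repl.keep (some 1) (Repl.repl (some 2) (none) (Repl.repl (some 3) (some 4) (Repl.repl (some 4) (some 3) (Repl.nil))))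
  exact isResult_construct pat123 patS32 [some 1, some 2, some 3, some 4] [some 1, none, some 4, some 3] [some 2, some 3, some 4] [none, some 4, some 3] [1, 2, 3, 4] [1, 3, 2] 5 5 4 m
    (by norm_num) (by decide) (by decide)
    (isCopy_pre _ _ 3 rfl rfl (by decide) (ordIso_pre _ _ 3 rfl rfl (by decide)))
    ⟨by decide, by decide⟩
    (isCopy_pre _ _ 3 rfl rfl (by decide) (ordIso_pre _ _ 2 rfl rfl (by decide)))
    (by decide) (by decide)
    (agree_pre _ _ _ _ rfl rfl (by decide))
    hrepl (by decide) rfl rfl (by decide)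
    (ordIso_pre _ _ 4 rfl rfl (by decide))
    rfl (by decide) (by decide)
    (ordIso_pre _ _ 3 rfl rfl (by decide))

lemma step2_patS32 (m : ℕ) :
    IsResult patS32 pat123 ([1, 3, 2] ++ List.range' 4 m) ([2, 1, 3, 4] ++ List.range' 5 m) := by
  have hrepl : Repl [none, some 4, some 3] [some 2, some 3, some 4] [none, some 1, some 4, some 3] [some 2, some 1, some 3, some 4] :=
    Repl.repl (none) (some 2) (Repl.keep (some 1) (Repl.repl (some 4) (some 3) (Repl.repl (some 3) (some 4) (Repl.nil))))
  exact isResult_construct patS32 pat123 [none, some 1, some 4, some 3] [some 2, some 1, some 3, some 4] [none, some 4, some 3] [some 2, some 3, some 4] [1, 3, 2] [2, 1, 3, 4] 5 4 5 m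
    (by norm_num) (by decide) (by decide)
    (isCopy_pre _ _ 3 rfl rfl (by decide) (ordIso_pre _ _ 2 rfl rfl (by decide)))
    ⟨by decide, by decide⟩
    (isCopy_pre _ _ 3 rfl rfl (by decide) (ordIso_pre _ _ 3 rfl rfl (by decide)))
    (by decide) (by decide)
    (agree_pre _ _ _ _ rfl rfl (by decide))
    hrepl (by decide) rfl rfl (by decide)
    (ordIso_pre _ _ 3 rfl rfl (by decide))
    rfl (by decide) (by decide)
    (ordIso_pre _ _ 4 rfl rfl (by decide))

lemma step3_patS32 (m : ℕ) :
    IsResult patS32 pat123 ([2, 1, 3, 4] ++ List.range' 5 m) ([1, 2, 3, 4, 5] ++ List.range' 6 m) := by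
  have hrepl : Repl [none, some 3, some 2] [some 1, some 2, some 3] [none, some 3, some 2, some 4, some 5] [some 1, some 2, some 3, some 4, some 5] :=
    Repl.repl (none) (some 1) (Repl.repl (some 3) (some 2) (Repl.repl (some 2) (some 3) (Repl.keep (some 4) (Repl.keep (some 5) (Repl.nil)))))
  exact isResult_construct patS32 pat123 [none, some 3, some 2, some 4, some 5] [some 1, some 2, some 3, some 4, some 5] [none, some 3, some 2] [some 1, some 2, some 3] [2, 1, 3, 4] [1, 2, 3, 4, 5] 6 5 6 m
    (by norm_num) (by decide) (by decide)
    (isCopy_pre _ _ 3 rfl rfl (by decide) (ordIso_pre _ _ 2 rfl rfl (by decide)))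
    ⟨by decide, by decide⟩
    (isCopy_pre _ _ 3 rfl rfl (by decide) (ordIso_pre _ _ 3 rfl rfl (by decide)))
    (by decide) (by decide)
    (agree_pre _ _ _ _ rfl rfl (by decide))
    hrepl (by decide) rfl rfl (by decide)
    (ordIso_pre _ _ 4 rfl rfl (by decide))
    rfl (by decide) (by decide)
    (ordIso_pre _ _ 5 rfl rfl (by decide))

lemma step1_pat3S2 (m : ℕ) :
    IsResult pat123 pat3S2 ([1, 2, 3, 4] ++ List.range' 5 m) ([3, 1, 2] ++ List.range' 4 m) := by
  have hrepl : Repl [some 1, some 3, some 4] [some 4, none, some 3] [some 1, some 2, some 3, some 4] [some 4, some 2, none, some 3] :=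
    Repl.repl (some 1) (some 4) (Repl.keep (some 2) (Repl.repl (some 3) (none) (Repl.repl (some 4) (some 3) (Repl.nil))))
  exact isResult_construct pat123 pat3S2 [some 1, some 2, some 3, some 4] [some 4, some 2, none, some 3] [some 1, some 3, some 4] [some 4, none, some 3] [1, 2, 3, 4] [3, 1, 2] 5 5 4 m
    (by norm_num) (by decide) (by decide)
    (isCopy_pre _ _ 3 rfl rfl (by decide) (ordIso_pre _ _ 3 rfl rfl (by decide)))
    ⟨by decide, by decide⟩
    (isCopy_pre _ _ 3 rfl rfl (by decide) (ordIso_pre _ _ 2 rfl rfl (by decide)))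
    (by decide) (by decide)
    (agree_pre _ _ _ _ rfl rfl (by decide))
    hrepl (by decide) rfl rfl (by decide)
    (ordIso_pre _ _ 4 rfl rfl (by decide))
    rfl (by decide) (by decide)
    (ordIso_pre _ _ 3 rfl rfl (by decide))

lemma step2_pat3S2 (m : ℕ) :
    IsResult pat3S2 pat123 ([3, 1, 2] ++ List.range' 4 m) ([1, 2, 4, 3] ++ List.range' 5 m) := by
  have hrepl : Repl [some 4, none, some 2] [some 1, some 2, some 4] [some 4, none, some 2, some 3] [some 1, some 2, some 4, some 3] :=
    Repl.repl (some 4) (some 1) (Repl.repl (none) (some 2) (Repl.repl (some 2) (some 4) (Repl.keep (some 3) (Repl.nil))))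
  exact isResult_construct pat3S2 pat123 [some 4, none, some 2, some 3] [some 1, some 2, some 4, some 3] [some 4, none, some 2] [some 1, some 2, some 4] [3, 1, 2] [1, 2, 4, 3] 5 4 5 m
    (by norm_num) (by decide) (by decide)
    (isCopy_pre _ _ 3 rfl rfl (by decide) (ordIso_pre _ _ 2 rfl rfl (by decide)))
    ⟨by decide, by decide⟩
    (isCopy_pre _ _ 3 rfl rfl (by decide) (ordIso_pre _ _ 3 rfl rfl (by decide)))
    (by decide) (by decide)
    (agree_pre _ _ _ _ rfl rfl (by decide))
    hrepl (by decide) rfl rfl (by decide)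
    (ordIso_pre _ _ 3 rfl rfl (by decide))
    rfl (by decide) (by decide)
    (ordIso_pre _ _ 4 rfl rfl (by decide))

lemma step3_pat3S2 (m : ℕ) :
    IsResult pat3S2 pat123 ([1, 2, 4, 3] ++ List.range' 5 m) ([1, 2, 3, 4, 5] ++ List.range' 6 m) := by
  have hrepl : Repl [some 5, none, some 4] [some 3, some 4, some 5] [some 1, some 2, some 5, none, some 4] [some 1, some 2, some 3, some 4, some 5] :=
    Repl.keep (some 1) (Repl.keep (some 2) (Repl.repl (some 5) (some 3) (Repl.repl (none) (some 4) (Repl.repl (some 4) (some 5) (Repl.nil)))))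
  exact isResult_construct pat3S2 pat123 [some 1, some 2, some 5, none, some 4] [some 1, some 2, some 3, some 4, some 5] [some 5, none, some 4] [some 3, some 4, some 5] [1, 2, 4, 3] [1, 2, 3, 4, 5] 6 5 6 m
    (by norm_num) (by decide) (by decide)
    (isCopy_pre _ _ 3 rfl rfl (by decide) (ordIso_pre _ _ 2 rfl rfl (by decide)))
    ⟨by decide, by decide⟩
    (isCopy_pre _ _ 3 rfl rfl (by decide) (ordIso_pre _ _ 3 rfl rfl (by decide)))
    (by decide) (by decide)
    (agree_pre _ _ _ _ rfl rfl (by decide))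
    hrepl (by decide) rfl rfl (by decide)
    (ordIso_pre _ _ 4 rfl rfl (by decide))
    rfl (by decide) (by decide)
    (ordIso_pre _ _ 5 rfl rfl (by decide))

lemma step1_pat32S (m : ℕ) :
    IsResult pat123 pat32S ([1, 2, 3, 4] ++ List.range' 5 m) ([3, 1, 2] ++ List.range' 4 m) := by
  have hrepl : Repl [some 1, some 3, some 4] [some 4, some 3, none] [some 1, some 2, some 3, some 4] [some 4, some 2, some 3, none] :=
    Repl.repl (some 1) (some 4) (Repl.keep (some 2) (Repl.repl (some 3) (some 3) (Repl.repl (some 4) (none) (Repl.nil))))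
  exact isResult_construct pat123 pat32S [some 1, some 2, some 3, some 4] [some 4, some 2, some 3, none] [some 1, some 3, some 4] [some 4, some 3, none] [1, 2, 3, 4] [3, 1, 2] 5 5 4 m
    (by norm_num) (by decide) (by decide)
    (isCopy_pre _ _ 3 rfl rfl (by decide) (ordIso_pre _ _ 3 rfl rfl (by decide)))
    ⟨by decide, by decide⟩
    (isCopy_pre _ _ 3 rfl rfl (by decide) (ordIso_pre _ _ 2 rfl rfl (by decide)))
    (by decide) (by decide)
    (agree_pre _ _ _ _ rfl rfl (by decide))
    hrepl (by decide) rfl rfl (by decide)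
    (ordIso_pre _ _ 4 rfl rfl (by decide))
    rfl (by decide) (by decide)
    (ordIso_pre _ _ 3 rfl rfl (by decide))

lemma step2_pat32S (m : ℕ) :
    IsResult pat32S pat123 ([3, 1, 2] ++ List.range' 4 m) ([2, 1, 3, 4] ++ List.range' 5 m) := by
  have hrepl : Repl [some 4, some 3, none] [some 2, some 3, some 4] [some 4, some 1, some 3, none] [some 2, some 1, some 3, some 4] :=
    Repl.repl (some 4) (some 2) (Repl.keep (some 1) (Repl.repl (some 3) (some 3) (Repl.repl (none) (some 4) (Repl.nil))))
  exact isResult_construct pat32S pat123 [some 4, some 1, some 3, none] [some 2, some 1, some 3, some 4] [some 4, some 3, none] [some 2, some 3, some 4] [3, 1, 2] [2, 1, 3, 4] 5 4 5 m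
    (by norm_num) (by decide) (by decide)
    (isCopy_pre _ _ 3 rfl rfl (by decide) (ordIso_pre _ _ 2 rfl rfl (by decide)))
    ⟨by decide, by decide⟩
    (isCopy_pre _ _ 3 rfl rfl (by decide) (ordIso_pre _ _ 3 rfl rfl (by decide)))
    (by decide) (by decide)
    (agree_pre _ _ _ _ rfl rfl (by decide))
    hrepl (by decide) rfl rfl (by decide)
    (ordIso_pre _ _ 3 rfl rfl (by decide))
    rfl (by decide) (by decide)
    (ordIso_pre _ _ 4 rfl rfl (by decide))

lemma step3_pat32S (m : ℕ) :
    IsResult pat32S pat123 ([2, 1, 3, 4] ++ List.range' 5 m) ([1, 2, 3, 4, 5] ++ List.range' 6 m) := by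
  have hrepl : Repl [some 3, some 2, none] [some 1, some 2, some 3] [some 3, some 2, none, some 4, some 5] [some 1, some 2, some 3, some 4, some 5] :=
    Repl.repl (some 3) (some 1) (Repl.repl (some 2) (some 2) (Repl.repl (none) (some 3) (Repl.keep (some 4) (Repl.keep (some 5) (Repl.nil)))))
  exact isResult_construct pat32S pat123 [some 3, some 2, none, some 4, some 5] [some 1, some 2, some 3, some 4, some 5] [some 3, some 2, none] [some 1, some 2, some 3] [2, 1, 3, 4] [1, 2, 3, 4, 5] 6 5 6 m
    (by norm_num) (by decide) (by decide)
    (isCopy_pre _ _ 3 rfl rfl (by decide) (ordIso_pre _ _ 2 rfl rfl (by decide)))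
    ⟨by decide, by decide⟩
    (isCopy_pre _ _ 3 rfl rfl (by decide) (ordIso_pre _ _ 3 rfl rfl (by decide)))
    (by decide) (by decide)
    (agree_pre _ _ _ _ rfl rfl (by decide))
    hrepl (by decide) rfl rfl (by decide)
    (ordIso_pre _ _ 4 rfl rfl (by decide))
    rfl (by decide) (by decide)
    (ordIso_pre _ _ 5 rfl rfl (by decide))

lemma step1_patS21 (m : ℕ) :
    IsResult pat123 patS21 ([1, 2, 3, 4] ++ List.range' 5 m) ([2, 3, 1] ++ List.range' 4 m) := by
  have hrepl : Repl [some 1, some 2, some 4] [none, some 2, some 1] [some 1, some 2, some 3, some 4] [none, some 2, some 3, some 1] :=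
    Repl.repl (some 1) (none) (Repl.repl (some 2) (some 2) (Repl.keep (some 3) (Repl.repl (some 4) (some 1) (Repl.nil))))
  exact isResult_construct pat123 patS21 [some 1, some 2, some 3, some 4] [none, some 2, some 3, some 1] [some 1, some 2, some 4] [none, some 2, some 1] [1, 2, 3, 4] [2, 3, 1] 5 5 4 m
    (by norm_num) (by decide) (by decide)
    (isCopy_pre _ _ 3 rfl rfl (by decide) (ordIso_pre _ _ 3 rfl rfl (by decide)))
    ⟨by decide, by decide⟩
    (isCopy_pre _ _ 3 rfl rfl (by decide) (ordIso_pre _ _ 2 rfl rfl (by decide)))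
    (by decide) (by decide)
    (agree_pre _ _ _ _ rfl rfl (by decide))
    hrepl (by decide) rfl rfl (by decide)
    (ordIso_pre _ _ 4 rfl rfl (by decide))
    rfl (by decide) (by decide)
    (ordIso_pre _ _ 3 rfl rfl (by decide))

lemma step2_patS21 (m : ℕ) :
    IsResult patS21 pat123 ([2, 3, 1] ++ List.range' 4 m) ([1, 2, 4, 3] ++ List.range' 5 m) := by
  have hrepl : Repl [none, some 2, some 1] [some 1, some 2, some 3] [none, some 2, some 4, some 1] [some 1, some 2, some 4, some 3] :=
    Repl.repl (none) (some 1) (Repl.repl (some 2) (some 2) (Repl.keep (some 4) (Repl.repl (some 1) (some 3) (Repl.nil))))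
  exact isResult_construct patS21 pat123 [none, some 2, some 4, some 1] [some 1, some 2, some 4, some 3] [none, some 2, some 1] [some 1, some 2, some 3] [2, 3, 1] [1, 2, 4, 3] 5 4 5 m
    (by norm_num) (by decide) (by decide)
    (isCopy_pre _ _ 3 rfl rfl (by decide) (ordIso_pre _ _ 2 rfl rfl (by decide)))
    ⟨by decide, by decide⟩
    (isCopy_pre _ _ 3 rfl rfl (by decide) (ordIso_pre _ _ 3 rfl rfl (by decide)))
    (by decide) (by decide)
    (agree_pre _ _ _ _ rfl rfl (by decide))
    hrepl (by decide) rfl rfl (by decide)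
    (ordIso_pre _ _ 3 rfl rfl (by decide))
    rfl (by decide) (by decide)
    (ordIso_pre _ _ 4 rfl rfl (by decide))

lemma step3_patS21 (m : ℕ) :
    IsResult patS21 pat123 ([1, 2, 4, 3] ++ List.range' 5 m) ([1, 2, 3, 4, 5] ++ List.range' 6 m) := by
  have hrepl : Repl [none, some 4, some 3] [some 3, some 4, some 5] [some 1, some 2, none, some 4, some 3] [some 1, some 2, some 3, some 4, some 5] :=
    Repl.keep (some 1) (Repl.keep (some 2) (Repl.repl (none) (some 3) (Repl.repl (some 4) (some 4) (Repl.repl (some 3) (some 5) (Repl.nil)))))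
  exact isResult_construct patS21 pat123 [some 1, some 2, none, some 4, some 3] [some 1, some 2, some 3, some 4, some 5] [none, some 4, some 3] [some 3, some 4, some 5] [1, 2, 4, 3] [1, 2, 3, 4, 5] 6 5 6 m
    (by norm_num) (by decide) (by decide)
    (isCopy_pre _ _ 3 rfl rfl (by decide) (ordIso_pre _ _ 2 rfl rfl (by decide)))
    ⟨by decide, by decide⟩
    (isCopy_pre _ _ 3 rfl rfl (by decide) (ordIso_pre _ _ 3 rfl rfl (by decide)))
    (by decide) (by decide)
    (agree_pre _ _ _ _ rfl rfl (by decide))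
    hrepl (by decide) rfl rfl (by decide)
    (ordIso_pre _ _ 4 rfl rfl (by decide))
    rfl (by decide) (by decide)
    (ordIso_pre _ _ 5 rfl rfl (by decide))

lemma step1_pat2S1 (m : ℕ) :
    IsResult pat123 pat2S1 ([1, 2, 3, 4] ++ List.range' 5 m) ([3, 2, 1] ++ List.range' 4 m) := by
  have hrepl : Repl [some 1, some 3, some 4] [some 3, none, some 1] [some 1, some 2, some 3, some 4] [some 3, some 2, none, some 1] :=
    Repl.repl (some 1) (some 3) (Repl.keep (some 2) (Repl.repl (some 3) (none) (Repl.repl (some 4) (some 1) (Repl.nil))))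
  exact isResult_construct pat123 pat2S1 [some 1, some 2, some 3, some 4] [some 3, some 2, none, some 1] [some 1, some 3, some 4] [some 3, none, some 1] [1, 2, 3, 4] [3, 2, 1] 5 5 4 m
    (by norm_num) (by decide) (by decide)
    (isCopy_pre _ _ 3 rfl rfl (by decide) (ordIso_pre _ _ 3 rfl rfl (by decide)))
    ⟨by decide, by decide⟩
    (isCopy_pre _ _ 3 rfl rfl (by decide) (ordIso_pre _ _ 2 rfl rfl (by decide)))
    (by decide) (by decide)
    (agree_pre _ _ _ _ rfl rfl (by decide))
    hrepl (by decide) rfl rfl (by decide)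
    (ordIso_pre _ _ 4 rfl rfl (by decide))
    rfl (by decide) (by decide)
    (ordIso_pre _ _ 3 rfl rfl (by decide))

lemma step2_pat2S1 (m : ℕ) :
    IsResult pat2S1 pat123 ([3, 2, 1] ++ List.range' 4 m) ([1, 3, 2, 4] ++ List.range' 5 m) := by
  have hrepl : Repl [some 3, none, some 1] [some 1, some 3, some 4] [some 3, none, some 2, some 1] [some 1, some 3, some 2, some 4] :=
    Repl.repl (some 3) (some 1) (Repl.repl (none) (some 3) (Repl.keep (some 2) (Repl.repl (some 1) (some 4) (Repl.nil))))
  exact isResult_construct pat2S1 pat123 [some 3, none, some 2, some 1] [some 1, some 3, some 2, some 4] [some 3, none, some 1] [some 1, some 3, some 4] [3, 2, 1] [1, 3, 2, 4] 5 4 5 m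
    (by norm_num) (by decide) (by decide)
    (isCopy_pre _ _ 3 rfl rfl (by decide) (ordIso_pre _ _ 2 rfl rfl (by decide)))
    ⟨by decide, by decide⟩
    (isCopy_pre _ _ 3 rfl rfl (by decide) (ordIso_pre _ _ 3 rfl rfl (by decide)))
    (by decide) (by decide)
    (agree_pre _ _ _ _ rfl rfl (by decide))
    hrepl (by decide) rfl rfl (by decide)
    (ordIso_pre _ _ 3 rfl rfl (by decide))
    rfl (by decide) (by decide)
    (ordIso_pre _ _ 4 rfl rfl (by decide))

lemma step3_pat2S1 (m : ℕ) :
    IsResult pat2S1 pat123 ([1, 3, 2, 4] ++ List.range' 5 m) ([1, 2, 3, 4, 5] ++ List.range' 6 m) := by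
  have hrepl : Repl [some 3, none, some 2] [some 2, some 3, some 4] [some 1, some 3, none, some 2, some 5] [some 1, some 2, some 3, some 4, some 5] :=
    Repl.keep (some 1) (Repl.repl (some 3) (some 2) (Repl.repl (none) (some 3) (Repl.repl (some 2) (some 4) (Repl.keep (some 5) (Repl.nil)))))
  exact isResult_construct pat2S1 pat123 [some 1, some 3, none, some 2, some 5] [some 1, some 2, some 3, some 4, some 5] [some 3, none, some 2] [some 2, some 3, some 4] [1, 3, 2, 4] [1, 2, 3, 4, 5] 6 5 6 m
    (by norm_num) (by decide) (by decide)
    (isCopy_pre _ _ 3 rfl rfl (by decide) (ordIso_pre _ _ 2 rfl rfl (by decide)))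
    ⟨by decide, by decide⟩
    (isCopy_pre _ _ 3 rfl rfl (by decide) (ordIso_pre _ _ 3 rfl rfl (by decide)))
    (by decide) (by decide)
    (agree_pre _ _ _ _ rfl rfl (by decide))
    hrepl (by decide) rfl rfl (by decide)
    (ordIso_pre _ _ 4 rfl rfl (by decide))
    rfl (by decide) (by decide)
    (ordIso_pre _ _ 5 rfl rfl (by decide))

lemma step1_pat21S (m : ℕ) :
    IsResult pat123 pat21S ([1, 2, 3, 4] ++ List.range' 5 m) ([2, 1, 3] ++ List.range' 4 m) := by
  have hrepl : Repl [some 1, some 2, some 4] [some 2, some 1, none] [some 1, some 2, some 3, some 4] [some 2, some 1, some 3, none] :=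
    Repl.repl (some 1) (some 2) (Repl.repl (some 2) (some 1) (Repl.keep (some 3) (Repl.repl (some 4) (none) (Repl.nil))))
  exact isResult_construct pat123 pat21S [some 1, some 2, some 3, some 4] [some 2, some 1, some 3, none] [some 1, some 2, some 4] [some 2, some 1, none] [1, 2, 3, 4] [2, 1, 3] 5 5 4 m
    (by norm_num) (by decide) (by decide)
    (isCopy_pre _ _ 3 rfl rfl (by decide) (ordIso_pre _ _ 3 rfl rfl (by decide)))
    ⟨by decide, by decide⟩
    (isCopy_pre _ _ 3 rfl rfl (by decide) (ordIso_pre _ _ 2 rfl rfl (by decide)))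
    (by decide) (by decide)
    (agree_pre _ _ _ _ rfl rfl (by decide))
    hrepl (by decide) rfl rfl (by decide)
    (ordIso_pre _ _ 4 rfl rfl (by decide))
    rfl (by decide) (by decide)
    (ordIso_pre _ _ 3 rfl rfl (by decide))

lemma step2_pat21S (m : ℕ) :
    IsResult pat21S pat123 ([2, 1, 3] ++ List.range' 4 m) ([1, 2, 4, 3] ++ List.range' 5 m) := by
  have hrepl : Repl [some 2, some 1, none] [some 1, some 2, some 3] [some 2, some 1, some 4, none] [some 1, some 2, some 4, some 3] :=
    Repl.repl (some 2) (some 1) (Repl.repl (some 1) (some 2) (Repl.keep (some 4) (Repl.repl (none) (some 3) (Repl.nil))))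
  exact isResult_construct pat21S pat123 [some 2, some 1, some 4, none] [some 1, some 2, some 4, some 3] [some 2, some 1, none] [some 1, some 2, some 3] [2, 1, 3] [1, 2, 4, 3] 5 4 5 m
    (by norm_num) (by decide) (by decide)
    (isCopy_pre _ _ 3 rfl rfl (by decide) (ordIso_pre _ _ 2 rfl rfl (by decide)))
    ⟨by decide, by decide⟩
    (isCopy_pre _ _ 3 rfl rfl (by decide) (ordIso_pre _ _ 3 rfl rfl (by decide)))
    (by decide) (by decide)
    (agree_pre _ _ _ _ rfl rfl (by decide))
    hrepl (by decide) rfl rfl (by decide)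
    (ordIso_pre _ _ 3 rfl rfl (by decide))
    rfl (by decide) (by decide)
    (ordIso_pre _ _ 4 rfl rfl (by decide))

lemma step3_pat21S (m : ℕ) :
    IsResult pat21S pat123 ([1, 2, 4, 3] ++ List.range' 5 m) ([1, 2, 3, 4, 5] ++ List.range' 6 m) := by
  have hrepl : Repl [some 4, some 3, none] [some 3, some 4, some 5] [some 1, some 2, some 4, some 3, none] [some 1, some 2, some 3, some 4, some 5] :=
    Repl.keep (some 1) (Repl.keep (some 2) (Repl.repl (some 4) (some 3) (Repl.repl (some 3) (some 4) (Repl.repl (none) (some 5) (Repl.nil)))))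
  exact isResult_construct pat21S pat123 [some 1, some 2, some 4, some 3, none] [some 1, some 2, some 3, some 4, some 5] [some 4, some 3, none] [some 3, some 4, some 5] [1, 2, 4, 3] [1, 2, 3, 4, 5] 6 5 6 m
    (by norm_num) (by decide) (by decide)
    (isCopy_pre _ _ 3 rfl rfl (by decide) (ordIso_pre _ _ 2 rfl rfl (by decide)))
    ⟨by decide, by decide⟩
    (isCopy_pre _ _ 3 rfl rfl (by decide) (ordIso_pre _ _ 3 rfl rfl (by decide)))
    (by decide) (by decide)
    (agree_pre _ _ _ _ rfl rfl (by decide))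
    hrepl (by decide) rfl rfl (by decide)
    (ordIso_pre _ _ 4 rfl rfl (by decide))
    rfl (by decide) (by decide)
    (ordIso_pre _ _ 5 rfl rfl (by decide))

lemma isResult_permList {A B : SPat} {π σ : List ℕ} (h : IsResult A B π σ) :
    IsPermList σ := by
  obtain ⟨_, _, _, _, _, _, _, _, _, _, _, _, h9, _⟩ := h
  exact h9

lemma isPermList_idPerm (n : ℕ) : IsPermList (idPerm n) := by
  unfold IsPermList idPerm
  rw [List.length_range']

lemma equiv_of_steps (β : SPat) (X Y : ℕ → List ℕ)
    (h1 : ∀ m, IsResult pat123 β (idPerm (m+4)) (X m))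
    (h2 : ∀ m, IsResult β pat123 (X m) (Y m))
    (h3 : ∀ m, IsResult β pat123 (Y m) (idPerm (m+5))) :
    ∀ m n, 4 ≤ m → 4 ≤ n → PermEquiv pat123 β (idPerm m) (idPerm n) := by
  have up : ∀ m : ℕ, PermEquiv pat123 β (idPerm (m+4)) (idPerm (m+5)) := by
    intro m
    exact Relation.ReflTransGen.head (Or.inl (h1 m))
      (Relation.ReflTransGen.head (Or.inr (h2 m))
        (Relation.ReflTransGen.single (Or.inr (h3 m))))
  have down : ∀ m : ℕ, PermEquiv pat123 β (idPerm (m+5)) (idPerm (m+4)) := by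
    intro m
    have hX : IsPermList (X m) := isResult_permList (h1 m)
    have hY : IsPermList (Y m) := isResult_permList (h2 m)
    have s3' : IsResult pat123 β (idPerm (m+5)) (Y m) := isResult_symm hY (h3 m)
    have s2' : IsResult pat123 β (Y m) (X m) := isResult_symm hX (h2 m)
    have s1' : IsResult β pat123 (X m) (idPerm (m+4)) :=
      isResult_symm (isPermList_idPerm (m+4)) (h1 m)
    exact Relation.ReflTransGen.head (Or.inl s3')
      (Relation.ReflTransGen.head (Or.inl s2')
        (Relation.ReflTransGen.single (Or.inr s1')))
  have up' : ∀ k, 4 ≤ k → PermEquiv pat123 β (idPerm k) (idPerm (k+1)) := by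
    intro k hk
    obtain ⟨c, rfl⟩ := Nat.exists_eq_add_of_le hk
    rw [Nat.add_comm 4 c]
    exact up c
  have down' : ∀ k, 4 ≤ k → PermEquiv pat123 β (idPerm (k+1)) (idPerm k) := by
    intro k hk
    obtain ⟨c, rfl⟩ := Nat.exists_eq_add_of_le hk
    rw [Nat.add_comm 4 c]
    exact down c
  have fwd : ∀ c k, 4 ≤ k → PermEquiv pat123 β (idPerm k) (idPerm (k+c)) := by
    intro c
    induction c with
    | zero => intro k _; exact Relation.ReflTransGen.refl
    | succ c ih =>
      intro k hk
      exact Relation.ReflTransGen.trans (ih k hk) (up' (k+c) (by omega))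
  have bwd : ∀ c k, 4 ≤ k → PermEquiv pat123 β (idPerm (k+c)) (idPerm k) := by
    intro c
    induction c with
    | zero => intro k _; exact Relation.ReflTransGen.refl
    | succ c ih =>
      intro k hk
      exact Relation.ReflTransGen.trans (down' (k+c) (by omega)) (ih k hk)
  intro m n hm hn
  rcases le_total m n with h | h
  · obtain ⟨c, rfl⟩ := Nat.exists_eq_add_of_le h
    exact fwd c m hm
  · obtain ⟨c, rfl⟩ := Nat.exists_eq_add_of_le h
    exact bwd c n hn


/-- for `β ∈ {★32, 3★2, 32★, ★21, 2★1, 21★}`, all identity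
permutations of length at least 4 are equivalent under `123 ↔ β`. -/
theorem identities_equiv_32_21 :
    ∀ β ∈ ([patS32, pat3S2, pat32S, patS21, pat2S1, pat21S] : List SPat),
    ∀ m n : ℕ, 4 ≤ m → 4 ≤ n → PermEquiv pat123 β (idPerm m) (idPerm n) := by
  intro β hβ
  simp only [List.mem_cons, List.mem_singleton, List.not_mem_nil, or_false] at hβ
  rcases hβ with rfl | rfl | rfl | rfl | rfl | rfl
  · exact equiv_of_steps patS32 (fun m => [1, 3, 2] ++ List.range' 4 m)
      (fun m => [2, 1, 3, 4] ++ List.range' 5 m)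
      (fun m => by rw [idPerm_split4]; exact step1_patS32 m)
      (fun m => step2_patS32 m)
      (fun m => by rw [idPerm_split5]; exact step3_patS32 m)
  · exact equiv_of_steps pat3S2 (fun m => [3, 1, 2] ++ List.range' 4 m)
      (fun m => [1, 2, 4, 3] ++ List.range' 5 m)
      (fun m => by rw [idPerm_split4]; exact step1_pat3S2 m)
      (fun m => step2_pat3S2 m)
      (fun m => by rw [idPerm_split5]; exact step3_pat3S2 m)
  · exact equiv_of_steps pat32S (fun m => [3, 1, 2] ++ List.range' 4 m)
      (fun m => [2, 1, 3, 4] ++ List.range' 5 m)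
      (fun m => by rw [idPerm_split4]; exact step1_pat32S m)
      (fun m => step2_pat32S m)
      (fun m => by rw [idPerm_split5]; exact step3_pat32S m)
  · exact equiv_of_steps patS21 (fun m => [2, 3, 1] ++ List.range' 4 m)
      (fun m => [1, 2, 4, 3] ++ List.range' 5 m)
      (fun m => by rw [idPerm_split4]; exact step1_patS21 m)
      (fun m => step2_patS21 m)
      (fun m => by rw [idPerm_split5]; exact step3_patS21 m)
  · exact equiv_of_steps pat2S1 (fun m => [3, 2, 1] ++ List.range' 4 m)
      (fun m => [1, 3, 2, 4] ++ List.range' 5 m)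
      (fun m => by rw [idPerm_split4]; exact step1_pat2S1 m)
      (fun m => step2_pat2S1 m)
      (fun m => by rw [idPerm_split5]; exact step3_pat2S1 m)
  · exact equiv_of_steps pat21S (fun m => [2, 1, 3] ++ List.range' 4 m)
      (fun m => [1, 2, 4, 3] ++ List.range' 5 m)
      (fun m => by rw [idPerm_split4]; exact step1_pat21S m)
      (fun m => step2_pat21S m)
      (fun m => by rw [idPerm_split5]; exact step3_pat21S m)
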